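/- In the double affine Hecke algebra H_{q,t}(A_1), the assignments τ_+: X ↦ X, Y ↦ q^{-1/2}XY, T ↦ T extend to a well-defined algebra automorphism; that is, the images q^{-1/2}XY of Y and X of X, together with T, satisfy the four defining relations TXT = X^{-1}, T(q^{-1/2}XY)^{-1}T = q^{-1/2}XY, (q^{-1/2}XY)^{-1}X^{-1}(q^{-1/2}XY)XT^2 = q^{-1}, (T - t^{1/2})(T + t^{-1/2}) = 0. -/

import Mathlib

/-- in the double affine Hecke algebra `H_{q,t}(A₁)` the assignments
`τ₊ : X ↦ X, Y ↦ q^{-1/2}XY, T ↦ T` extend to an algebra automorphism: the images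
`X`, `Y' = q^{-1/2}XY` (with inverse `Y'⁻¹ = q^{1/2}Y⁻¹X⁻¹`) and `T` satisfy the four
defining relations of the DAHA. -/
theorem tau_plus_automorphism
    (F : Type*) [Field F] (A : Type*) [Ring A] [Algebra F A]
    (q2 t2 : F) (hq : q2 ≠ 0) (ht : t2 ≠ 0)
    (T X Xi Y Yi : A)
    (hX : X * Xi = 1) (hX' : Xi * X = 1) (hY : Y * Yi = 1) (hY' : Yi * Y = 1)
    (rel1 : T * X * T = Xi)
    (rel2 : T * Yi * T = Y)
    (rel3 : Yi * Xi * Y * X * T ^ 2 = algebraMap F A (q2 ^ 2)⁻¹)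
    (rel4 : (T - algebraMap F A t2) * (T + algebraMap F A t2⁻¹) = 0) :
    let Y' : A := algebraMap F A q2⁻¹ * X * Y
    let Yi' : A := algebraMap F A q2 * Yi * Xi
    Y' * Yi' = 1 ∧ Yi' * Y' = 1 ∧
      T * X * T = Xi ∧
      T * Yi' * T = Y' ∧
      Yi' * Xi * Y' * X * T ^ 2 = algebraMap F A (q2 ^ 2)⁻¹ ∧
      (T - algebraMap F A t2) * (T + algebraMap F A t2⁻¹) = 0 := by
  intro Y' Yi'
  set c := algebraMap F A with hcdef
  have comm : ∀ (a : F) (x : A), c a * x = x * c a := fun a x => Algebra.commutes a x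
  have swap : ∀ (a : F) (x y : A), x * (c a * y) = c a * (x * y) := by
    intro a x y
    rw [← mul_assoc, ← comm, mul_assoc]
  have hqi : c q2⁻¹ * c q2 = 1 := by
    rw [← map_mul, inv_mul_cancel₀ hq, map_one]
  have hqi' : c q2 * c q2⁻¹ = 1 := by
    rw [← map_mul, mul_inv_cancel₀ hq, map_one]
  have hti : c t2 * c t2⁻¹ = 1 := by
    rw [← map_mul, mul_inv_cancel₀ ht, map_one]
  -- right and left inverse of T
  have hTr : T * (T + c t2⁻¹ - c t2) = 1 := by
    have e : T * (T + c t2⁻¹ - c t2)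
        = (T - c t2) * (T + c t2⁻¹) + c t2 * c t2⁻¹ + (c t2 * T - T * c t2) := by
      noncomm_ring
    rw [e, rel4, hti, comm t2 T, sub_self, zero_add, add_zero]
  have hTl : (T + c t2⁻¹ - c t2) * T = 1 := by
    have e : (T + c t2⁻¹ - c t2) * T
        = (T - c t2) * (T + c t2⁻¹) + c t2 * c t2⁻¹ + (c t2⁻¹ * T - T * c t2⁻¹) := by
      noncomm_ring
    rw [e, rel4, hti, comm t2⁻¹ T, sub_self, zero_add, add_zero]
  -- key commutation: Y X T² = q⁻² X Y
  have key : Y * X * T ^ 2 = c (q2 ^ 2)⁻¹ * (X * Y) := by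
    have h := congrArg (fun z => X * Y * z) rel3
    have e : X * Y * (Yi * Xi * Y * X * T ^ 2)
        = (X * (Y * Yi)) * Xi * (Y * X * T ^ 2) := by noncomm_ring
    rw [e, hY, mul_one, hX, one_mul] at h
    rw [h, comm]
  -- τ₊(Y) τ₊(Y)⁻¹ = 1
  have h1 : Y' * Yi' = 1 := by
    show (c q2⁻¹ * X * Y) * (c q2 * Yi * Xi) = 1
    simp only [mul_assoc]
    rw [swap q2 Y, swap q2 X, ← mul_assoc (c q2⁻¹) (c q2), hqi, one_mul,
      ← mul_assoc Y Yi, hY, one_mul, hX]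
  have h2 : Yi' * Y' = 1 := by
    show (c q2 * Yi * Xi) * (c q2⁻¹ * X * Y) = 1
    simp only [mul_assoc]
    rw [swap q2⁻¹ Xi, swap q2⁻¹ Yi, ← mul_assoc (c q2) (c q2⁻¹), hqi', one_mul,
      ← mul_assoc Xi X, hX', one_mul, hY']
  -- auxiliary: inserting T⁻¹T and using rel1
  have hins : ∀ u v : A, (T * u * T) * ((T + c t2⁻¹ - c t2) * v) = T * (u * v) := by
    intro u v
    have e : (T * u * T) * ((T + c t2⁻¹ - c t2) * v)
        = T * u * (T * (T + c t2⁻¹ - c t2)) * v := by noncomm_ring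
    rw [e, hTr, mul_one, mul_assoc]
  have hXiT : (T + c t2⁻¹ - c t2) * (Xi * T) = X * T ^ 2 := by
    rw [← rel1]
    have e : (T + c t2⁻¹ - c t2) * (T * X * T * T)
        = ((T + c t2⁻¹ - c t2) * T) * (X * (T * T)) := by noncomm_ring
    rw [e, hTl, one_mul, ← pow_two]
  have hmid : T * (Yi * (Xi * T)) = c (q2 ^ 2)⁻¹ * (X * Y) := by
    rw [← hins Yi (Xi * T), rel2, hXiT, ← mul_assoc, key]
  -- τ₊(T) τ₊(Yi) τ₊(T) = τ₊(Y)
  have h4 : T * Yi' * T = Y' := by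
    show T * (c q2 * Yi * Xi) * T = c q2⁻¹ * X * Y
    simp only [mul_assoc]
    rw [swap q2 T, hmid, ← mul_assoc, ← map_mul]
    have hf : q2 * (q2 ^ 2)⁻¹ = q2⁻¹ := by field_simp
    rw [hf]
  -- third relation for the images
  have h5 : Yi' * Xi * Y' * X * T ^ 2 = c (q2 ^ 2)⁻¹ := by
    show (c q2 * Yi * Xi) * Xi * (c q2⁻¹ * X * Y) * X * T ^ 2 = c (q2 ^ 2)⁻¹
    simp only [mul_assoc]
    rw [swap q2⁻¹, swap q2⁻¹, swap q2⁻¹ Yi, ← mul_assoc (c q2) (c q2⁻¹), hqi', one_mul]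
    rw [show Xi * (Xi * (X * (Y * (X * T ^ 2)))) = Xi * ((Xi * X) * (Y * (X * T ^ 2))) from by
      simp only [mul_assoc], hX', one_mul]
    simp only [← mul_assoc]
    exact rel3
  exact ⟨h1, h2, rel1, h4, h5, rel4⟩
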